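/- arXiv:2010.05733 — 2 statements merged into one kernel-verified Lean document; each statement's English description precedes it below -/
import Mathlib

section
/- Let G be a graph and let (x,y) and (z,w) be two distinct ordered pairs of adjacent vertices of G with (x,y) ~mt (z,w). Then {x,y} ∩ {z,w} = ∅. -/
open SimpleGraph

/-- The closed neighborhood `N_G[v]` of a vertex `v`. -/
def closedNbhd {V : Type*} (G : SimpleGraph V) (v : V) : Set V :=
  insert v (G.neighborSet v)

/-- An ordered pair `(x, y)` is comparable if `N_G[x] ⊆ N_G[y]`. -/
def ComparablePair {V : Type*} (G : SimpleGraph V) (x y : V) : Prop :=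
  closedNbhd G x ⊆ closedNbhd G y

/-- `(x, y) ~mt (z, w)`: matched twins. -/
def MatchedTwins {V : Type*} (G : SimpleGraph V) (x y z w : V) : Prop :=
  closedNbhd G x \ {y} = closedNbhd G z \ {w} ∧
  closedNbhd G y \ {x} = closedNbhd G w \ {z}

/-- `(x, y) ~nt (z, w)`: nested twins. -/
def NestedTwins {V : Type*} (G : SimpleGraph V) (x y z w : V) : Prop :=
  G.neighborSet x \ {y} = G.neighborSet z \ {w} ∧
  closedNbhd G y \ {x} = closedNbhd G w \ {z}

/-- The square `H²` of a graph: two distinct vertices are adjacent iff they are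
at distance at most two in `H`. -/
def squareGraph {V : Type*} (H : SimpleGraph V) : SimpleGraph V where
  Adj u v := u ≠ v ∧ (H.Adj u v ∨ ∃ w, H.Adj u w ∧ H.Adj w v)
  symm := by
    refine ⟨?_⟩
    rintro u v ⟨hne, h⟩
    refine ⟨hne.symm, ?_⟩
    rcases h with h | ⟨w, h1, h2⟩
    · exact Or.inl h.symm
    · exact Or.inr ⟨w, h2.symm, h1.symm⟩
  loopless := by refine ⟨?_⟩; rintro u ⟨hne, _⟩; exact hne rfl

/-- `F` is (isomorphic to) a disjoint union `pK₁ + qK₂`: it has maximum degree at most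
one, `p` vertices of degree zero and `q` edges. -/
def IsDisjUnionK1K2 {W : Type*} (F : SimpleGraph W) (p q : ℕ) : Prop :=
  (∀ u v w : W, F.Adj u v → F.Adj u w → v = w) ∧
  {v : W | ∀ w, ¬ F.Adj v w}.ncard = p ∧
  F.edgeSet.ncard = q

/-- `ab` is an `S`-matching edge of type 1 in `H`. -/
def Type1Edge {V : Type*} (H : SimpleGraph V) (S : Set V) (a b : V) : Prop :=
  a ∉ S ∧ b ∉ S ∧ H.Adj a b ∧
  H.neighborSet a ∩ S = ∅ ∧ (H.neighborSet b ∩ S).Nonempty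

/-- `ab` is an `S`-matching edge of type 2 in `H`. -/
def Type2Edge {V : Type*} (H : SimpleGraph V) (S : Set V) (a b : V) : Prop :=
  a ∉ S ∧ b ∉ S ∧ H.Adj a b ∧
  (H.neighborSet a ∩ S).Nonempty ∧ (H.neighborSet b ∩ S).Nonempty ∧
  H.neighborSet a ∩ H.neighborSet b ∩ S = ∅

/-- `ab` is an `S`-matching edge of type 3 in `H`. -/
def Type3Edge {V : Type*} (H : SimpleGraph V) (S : Set V) (a b : V) : Prop :=
  a ∉ S ∧ b ∉ S ∧ H.Adj a b ∧
  (H.neighborSet a ∩ H.neighborSet b ∩ S).Nonempty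

theorem stmt0 {V : Type*} [Fintype V] (G : SimpleGraph V) (x y z w : V)
    (hxy : G.Adj x y) (hzw : G.Adj z w) (hne : (x, y) ≠ (z, w))
    (hmt : MatchedTwins G x y z w) :
    ({x, y} : Set V) ∩ {z, w} = ∅ := by
  obtain ⟨h1, h2⟩ := hmt
  have hxny : x ≠ y := hxy.ne
  have hznw : z ≠ w := hzw.ne
  -- x ≠ w
  have hxw : x ≠ w := by
    intro h
    have hx : x ∈ closedNbhd G x \ {y} := ⟨Set.mem_insert _ _, by simpa using hxny⟩
    rw [h1] at hx
    exact hx.2 (by simpa using h)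
  -- y ≠ z
  have hyz : y ≠ z := by
    intro h
    have hy : y ∈ closedNbhd G y \ {x} := ⟨Set.mem_insert _ _, by simpa using hxny.symm⟩
    rw [h2] at hy
    exact hy.2 (by simpa using h)
  -- x = z → y = w
  have hxz_yw : x = z → y = w := by
    intro h
    by_contra hyw
    have hy : y ∈ closedNbhd G z \ {w} := by
      refine ⟨?_, by simpa using hyw⟩
      rw [← h]
      exact Set.mem_insert_of_mem _ hxy
    rw [← h1] at hy
    exact hy.2 rfl
  -- y = w → x = z
  have hyw_xz : y = w → x = z := by
    intro h
    by_contra hxz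
    have hx : x ∈ closedNbhd G w \ {z} := by
      refine ⟨?_, by simpa using hxz⟩
      rw [← h]
      exact Set.mem_insert_of_mem _ hxy.symm
    rw [← h2] at hx
    exact hx.2 rfl
  ext a
  simp only [Set.mem_inter_iff, Set.mem_insert_iff, Set.mem_singleton_iff,
    Set.mem_empty_iff_false, iff_false, not_and]
  rintro (rfl | rfl) (rfl | rfl)
  · exact hne (by rw [hxz_yw rfl])
  · exact hxw rfl
  · exact hyz rfl
  · exact hne (by rw [hyw_xz rfl])
end

section
/- Let H be a square root of a connected graph G with at least three vertices such that H − S is isomorphic to pK_1 + qK_2 for a set S ⊆ V(G). If a_1b_1 and a_2b_2 are two distinct S-matching edges of type 1 in H such that N_H(b_1) ∩ S = N_H(b_2) ∩ S ≠ ∅, then (a_1,b_1) ~nt (a_2,b_2) in G. -/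
open SimpleGraph

lemma sq_edge_nbhds {V : Type*} (H : SimpleGraph V) (S : Set V) (a b : V)
    (hmatch : ∀ u v w : V, u ∉ S → v ∉ S → w ∉ S → H.Adj u v → H.Adj u w → v = w)
    (h : Type1Edge H S a b) (T : Set V) (hT : H.neighborSet b ∩ S = T)
    (hTne : T.Nonempty) :
    (squareGraph H).neighborSet a \ {b} = T ∧
    closedNbhd (squareGraph H) b \ {a} = {u | u ∈ T ∨ ∃ w ∈ T, H.Adj w u} := by
  obtain ⟨haS, hbS, hab, haSempty, -⟩ := h
  have hA : ∀ u, H.Adj a u → u = b := by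
    intro u hu
    by_cases huS : u ∈ S
    · have huin : u ∈ H.neighborSet a ∩ S := ⟨hu, huS⟩
      rw [haSempty] at huin
      exact huin.elim
    · exact hmatch a u b haS huS hbS hu hab
  have hB : ∀ u, u ∉ S → H.Adj b u → u = a := by
    intro u huS hu
    exact hmatch b u a hbS huS haS hu hab.symm
  have hTmem : ∀ u, u ∈ T ↔ H.Adj b u ∧ u ∈ S := by
    intro u; rw [← hT]; exact Iff.rfl
  constructor
  · ext u
    simp only [Set.mem_diff, Set.mem_singleton_iff, SimpleGraph.mem_neighborSet]
    constructor
    · rintro ⟨hadj, hub⟩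
      obtain ⟨hne, hcase⟩ := hadj
      rcases hcase with h' | ⟨w, h1, h2⟩
      · exact absurd (hA u h') hub
      · have hw := hA w h1; subst hw
        by_cases huS : u ∈ S
        · exact (hTmem u).2 ⟨h2, huS⟩
        · exact absurd (hB u huS h2) (fun e => hne e.symm)
    · intro hu
      obtain ⟨hadj, huS⟩ := (hTmem u).1 hu
      exact ⟨⟨fun e => haS (e ▸ huS), Or.inr ⟨b, hab, hadj⟩⟩, fun e => hbS (e ▸ huS)⟩
  · ext u
    simp only [closedNbhd, Set.mem_diff, Set.mem_insert_iff, Set.mem_singleton_iff,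
      SimpleGraph.mem_neighborSet, Set.mem_setOf_eq]
    constructor
    · rintro ⟨hub | hadj, hua⟩
      · subst hub
        obtain ⟨w, hwT⟩ := hTne
        exact Or.inr ⟨w, hwT, ((hTmem w).1 hwT).1.symm⟩
      · obtain ⟨hne, hcase⟩ := hadj
        rcases hcase with h' | ⟨w, h1, h2⟩
        · by_cases huS : u ∈ S
          · exact Or.inl ((hTmem u).2 ⟨h', huS⟩)
          · exact absurd (hB u huS h') hua
        · by_cases hwS : w ∈ S
          · exact Or.inr ⟨w, (hTmem w).2 ⟨h1, hwS⟩, h2⟩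
          · have hw := hB w hwS h1; subst hw
            exact absurd (hA u h2).symm hne
    · rintro (huT | ⟨w, hwT, hwu⟩)
      · obtain ⟨hadj, huS⟩ := (hTmem u).1 huT
        exact ⟨Or.inr ⟨hadj.ne, Or.inl hadj⟩, fun e => haS (e ▸ huS)⟩
      · obtain ⟨hbw, hwS⟩ := (hTmem w).1 hwT
        have hua : u ≠ a := by
          rintro rfl
          exact hbS ((hA w hwu.symm) ▸ hwS)
        by_cases hub : u = b
        · exact ⟨Or.inl hub, hua⟩
        · exact ⟨Or.inr ⟨fun e => hub e.symm, Or.inr ⟨w, hbw, hwu⟩⟩, hua⟩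

theorem stmt11 {V : Type*} [Fintype V] (G H : SimpleGraph V) (S : Set V) (p q : ℕ)
    (hconn : G.Connected) (hcard : 3 ≤ Fintype.card V)
    (hsq : G = squareGraph H)
    (hHS : IsDisjUnionK1K2 (SimpleGraph.induce Sᶜ H) p q)
    (a₁ b₁ a₂ b₂ : V)
    (h₁ : Type1Edge H S a₁ b₁) (h₂ : Type1Edge H S a₂ b₂)
    (hne : s(a₁, b₁) ≠ s(a₂, b₂))
    (heq : H.neighborSet b₁ ∩ S = H.neighborSet b₂ ∩ S)
    (hnonempty : (H.neighborSet b₁ ∩ S).Nonempty) :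
    NestedTwins G a₁ b₁ a₂ b₂ := by
  subst hsq
  have hmatch : ∀ u v w : V, u ∉ S → v ∉ S → w ∉ S → H.Adj u v → H.Adj u w → v = w := by
    intro u v w hu hv hw hv1 hv2
    have := hHS.1 ⟨u, hu⟩ ⟨v, hv⟩ ⟨w, hw⟩ hv1 hv2
    exact congrArg Subtype.val this
  obtain ⟨e1a, e1b⟩ := sq_edge_nbhds H S a₁ b₁ hmatch h₁ _ rfl hnonempty
  obtain ⟨e2a, e2b⟩ := sq_edge_nbhds H S a₂ b₂ hmatch h₂ _ heq.symm hnonempty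
  exact ⟨e1a.trans e2a.symm, e1b.trans e2b.symm⟩
end
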